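/- Let C be a rank-nondegenerate [n,k]_{q^m/q} code with generator matrix G, let 𝒰 be the F_q-span of the columns of G, and let u, v ∈ F_{q^m}^k be nonzero. Then σ^rk(uG) ⊆ σ^rk(vG) if and only if ⟨u⟩^⊥ ∩ 𝒰 ⊇ ⟨v⟩^⊥ ∩ 𝒰. -/

import Mathlib

open Module Submodule

/-- The rank support of a vector `v ∈ L^n` over the subfield `K`: the `K`-span of the
rows of the expansion matrix, i.e. the space of all `(φ (v 1), ..., φ (v n))` for
`K`-linear functionals `φ : L → K`. -/
noncomputable def rkSupport (K : Type) {L : Type} [Field K] [Field L] [Algebra K L]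
    {n : ℕ} (v : Fin n → L) : Submodule K (Fin n → K) :=
  LinearMap.range (LinearMap.pi (fun i => LinearMap.applyₗ (v i) :
    Fin n → Module.Dual K L →ₗ[K] K))


/-- The linear functional `u ↦ ∑ i, u i * v i` on `L^k`. -/
def dotLin {L : Type} [Field L] {k : ℕ} (v : Fin k → L) : (Fin k → L) →ₗ[L] L where
  toFun u := ∑ i, u i * v i
  map_add' u w := by simp [add_mul, Finset.sum_add_distrib]
  map_smul' a u := by simp [Finset.mul_sum, mul_assoc]

lemma rkSupport_le_iff {K L : Type} [Field K] [Field L] [Algebra K L] {n : ℕ}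
    (w w' : Fin n → L) :
    rkSupport K w ≤ rkSupport K w' ↔
      ∀ r : Fin n → K, (∑ j, r j • w' j) = 0 → (∑ j, r j • w j) = 0 := by
  constructor
  · intro h r hr
    rw [← Module.forall_dual_apply_eq_zero_iff K]
    intro φ
    have hx : (fun j => φ (w j)) ∈ rkSupport K w := ⟨φ, rfl⟩
    obtain ⟨ψ, hψ⟩ := h hx
    have hkey : ∀ j, ψ (w' j) = φ (w j) := fun j => congrFun hψ j
    calc φ (∑ j, r j • w j) = ∑ j, r j • φ (w j) := by
          rw [map_sum]; simp only [map_smul]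
      _ = ∑ j, r j • ψ (w' j) := by simp only [hkey]
      _ = ψ (∑ j, r j • w' j) := by rw [map_sum]; simp only [map_smul]
      _ = 0 := by rw [hr, map_zero]
  · rintro h x ⟨φ, rfl⟩
    set ρ' : (Fin n → K) →ₗ[K] L := Fintype.linearCombination K w' with hρ'
    set ρφ : (Fin n → K) →ₗ[K] K :=
      Fintype.linearCombination K (fun j => φ (w j)) with hρφ
    have hker : LinearMap.ker ρ' ≤ LinearMap.ker ρφ := by
      intro r hr
      rw [LinearMap.mem_ker] at hr ⊢
      rw [hρ', Fintype.linearCombination_apply] at hr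
      have h0 := h r hr
      rw [hρφ, Fintype.linearCombination_apply]
      calc (∑ j, r j • φ (w j)) = φ (∑ j, r j • w j) := by
            rw [map_sum]; simp only [map_smul]
        _ = 0 := by rw [h0, map_zero]
    obtain ⟨g, hg⟩ := LinearMap.exists_extend
      ((Submodule.liftQ (LinearMap.ker ρ') ρφ hker).comp
        (ρ'.quotKerEquivRange.symm : LinearMap.range ρ' →ₗ[K] _))
    refine ⟨g, ?_⟩
    funext j
    show g (w' j) = φ (w j)
    have hval : ρ' (Pi.single j (1 : K)) = w' j := by
      rw [hρ', Fintype.linearCombination_apply_single, one_smul]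
    have hmem : w' j ∈ LinearMap.range ρ' := ⟨Pi.single j 1, hval⟩
    have h1 : g (w' j) = ((Submodule.liftQ (LinearMap.ker ρ') ρφ hker).comp
        (ρ'.quotKerEquivRange.symm : LinearMap.range ρ' →ₗ[K] _)) ⟨w' j, hmem⟩ := by
      rw [← hg]; rfl
    rw [h1]
    have h2 : (⟨w' j, hmem⟩ : LinearMap.range ρ') =
        ⟨ρ' (Pi.single j 1), ⟨Pi.single j 1, rfl⟩⟩ := by
      ext; exact hval.symm
    rw [h2]
    rw [LinearMap.comp_apply]
    erw [LinearMap.quotKerEquivRange_symm_apply_image]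
    rw [Submodule.mkQ_apply, Submodule.liftQ_apply]
    rw [hρφ, Fintype.linearCombination_apply_single, one_smul]

theorem stmt_14 {K L : Type} [Field K] [Field L] [Algebra K L] {n k : ℕ}
    (C : Submodule L (Fin n → L)) (G : Matrix (Fin k) (Fin n) L)
    (hG : C = Submodule.span L (Set.range G))
    (hk : Module.finrank L C = k)
    (U : Submodule K (Fin k → L))
    (hU : U = Submodule.span K (Set.range G.transpose))
    (hnd : Module.finrank K U = n)
    (u v : Fin k → L) (hu : u ≠ 0) (hv : v ≠ 0) :
    rkSupport K (Matrix.vecMul u G) ≤ rkSupport K (Matrix.vecMul v G) ↔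
      (LinearMap.ker (dotLin v)).restrictScalars K ⊓ U ≤
        (LinearMap.ker (dotLin u)).restrictScalars K ⊓ U := by
  set ρc : (Fin n → K) →ₗ[K] (Fin k → L) :=
    Fintype.linearCombination K (fun j => G.transpose j) with hρc
  have hrange : LinearMap.range ρc = U := by
    rw [hρc, Fintype.range_linearCombination, hU]
  have hdot : ∀ (a : Fin k → L) (r : Fin n → K),
      dotLin a (ρc r) = ∑ j, r j • Matrix.vecMul a G j := by
    intro a r
    have : dotLin a (ρc r) = ((dotLin a).restrictScalars K) (ρc r) := rfl
    rw [this, hρc, Fintype.linearCombination_apply, map_sum]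
    refine Finset.sum_congr rfl fun j _ => ?_
    rw [map_smul]
    congr 1
    show dotLin a (G.transpose j) = Matrix.vecMul a G j
    simp [dotLin, Matrix.vecMul, dotProduct, Matrix.transpose_apply, mul_comm]
  rw [rkSupport_le_iff]
  constructor
  · intro H x hx
    obtain ⟨hxv, hxU⟩ := Submodule.mem_inf.mp hx
    rw [← hrange] at hxU
    obtain ⟨r, rfl⟩ := hxU
    have h1 : (∑ j, r j • Matrix.vecMul v G j) = 0 := by
      rw [← hdot]
      exact hxv
    have h2 := H r h1
    refine Submodule.mem_inf.mpr ⟨?_, hrange ▸ ⟨r, rfl⟩⟩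
    show dotLin u (ρc r) = 0
    rw [hdot]; exact h2
  · intro H r hr
    have hxU : ρc r ∈ U := hrange ▸ ⟨r, rfl⟩
    have hxv : ρc r ∈ (LinearMap.ker (dotLin v)).restrictScalars K := by
      show dotLin v (ρc r) = 0
      rw [hdot]; exact hr
    have := H (Submodule.mem_inf.mpr ⟨hxv, hxU⟩)
    have hxu : dotLin u (ρc r) = 0 := (Submodule.mem_inf.mp this).1
    rw [hdot] at hxu
    exact hxu
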